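/- For the Lie algebra [E1,E2]=2ξ, [ξ,E1]=(1−μ/2)E1+εE2, [ξ,E2]=−ε(κ+1)E1−(1−μ/2)E2 with ε=±1 and metric g(ξ,ξ)=1, g(E1,E2)=1 (other basis products zero), the Levi-Civita connection of the corresponding left-invariant metric satisfies ∇_ξξ=0, ∇_ξE1=−(μ/2)E1, ∇_ξE2=(μ/2)E2, ∇_{E1}ξ=−E1−εE2, ∇_{E1}E1=εξ, ∇_{E1}E2=ξ, ∇_{E2}ξ=ε(κ+1)E1+E2, ∇_{E2}E1=−ξ, ∇_{E2}E2=−ε(κ+1)ξ. -/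
import Mathlib

noncomputable section

def ξ : Fin 3 → ℝ := ![1, 0, 0]
def E1 : Fin 3 → ℝ := ![0, 1, 0]
def E2 : Fin 3 → ℝ := ![0, 0, 1]

/-- Artin (pseudo-Riemannian) metric: g(ξ,ξ) = 1, g(E1,E2) = 1, other products zero. -/
def ip (x y : Fin 3 → ℝ) : ℝ := x 0 * y 0 + x 1 * y 2 + x 2 * y 1

/-- Bracket [E1,E2] = 2ξ, [ξ,E1] = (1−μ/2)E1 + εE2, [ξ,E2] = −ε(κ+1)E1 − (1−μ/2)E2. -/
def br (κ μ ε : ℝ) (x y : Fin 3 → ℝ) : Fin 3 → ℝ :=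
  (x 1 * y 2 - x 2 * y 1) • ![2, 0, 0] +
  (x 0 * y 1 - x 1 * y 0) • ![0, 1 - μ / 2, ε] +
  (x 0 * y 2 - x 2 * y 0) • ![0, -(ε * (κ + 1)), -(1 - μ / 2)]

/-- The Levi-Civita connection (Koszul formula) of the left-invariant metric of the
paracontact metric (κ,μ)-Lie algebra has the stated coefficients. -/
theorem paracontact_connection (κ μ ε : ℝ) (hε : ε = 1 ∨ ε = -1)
    (nabla : (Fin 3 → ℝ) → (Fin 3 → ℝ) → (Fin 3 → ℝ))
    (hK : ∀ X Y Z, 2 * ip (nabla X Y) Z =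
      ip (br κ μ ε X Y) Z - ip (br κ μ ε Y Z) X + ip (br κ μ ε Z X) Y) :
    nabla ξ ξ = 0 ∧
    nabla ξ E1 = -(μ / 2) • E1 ∧
    nabla ξ E2 = (μ / 2) • E2 ∧
    nabla E1 ξ = -E1 - ε • E2 ∧
    nabla E1 E1 = ε • ξ ∧
    nabla E1 E2 = ξ ∧
    nabla E2 ξ = (ε * (κ + 1)) • E1 + E2 ∧
    nabla E2 E1 = -ξ ∧
    nabla E2 E2 = -(ε * (κ + 1)) • ξ := by
  have key : ∀ X Y v : Fin 3 → ℝ,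
      (∀ Z, 2 * ip v Z = ip (br κ μ ε X Y) Z - ip (br κ μ ε Y Z) X + ip (br κ μ ε Z X) Y) →
      nabla X Y = v := by
    intro X Y v h
    have a0 := hK X Y ξ; have b0 := h ξ
    have a1 := hK X Y E2; have b1 := h E2
    have a2 := hK X Y E1; have b2 := h E1
    simp only [ip, ξ, E1, E2, Matrix.cons_val_zero, Matrix.cons_val_one, Matrix.head_cons,
      Matrix.cons_val_two, Matrix.tail_cons] at a0 b0 a1 b1 a2 b2
    have e0 : nabla X Y 0 = v 0 := by linarith
    have e1 : nabla X Y 1 = v 1 := by linarith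
    have e2 : nabla X Y 2 = v 2 := by linarith
    funext i
    fin_cases i <;> [exact e0; exact e1; exact e2]
  refine ⟨?_, ?_, ?_, ?_, ?_, ?_, ?_, ?_, ?_⟩ <;>
    apply key <;> intro Z <;> rcases hε with h | h <;> subst h <;>
    simp [ip, br, ξ, E1, E2] <;> ring
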